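/- For ℓ ≥ 2 and k ≥ 1, there exists an edge-coloring of the complete graph on (2ℓ−1) + (k−1)(ℓ−1) vertices with exactly k colors that contains no monochromatic matching of size ℓ and no rainbow cycle (in particular, no rainbow triangle and no rainbow K_3+e). -/

import Mathlib

open SimpleGraph Finset

universe u v

variable {α : Type u} {β : Type v}

/-- The set of colors used on (non-loop) edges of `K_n` by an edge-coloring `c`. -/
def edgeColors {n : ℕ} (c : Sym2 (Fin n) → ℕ) : Finset ℕ :=
  (Finset.univ.filter fun e : Sym2 (Fin n) => ¬ e.IsDiag).image c

/-- `c` contains a monochromatic copy of `G`. -/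
def HasMonoCopy {n : ℕ} (c : Sym2 (Fin n) → ℕ) (G : SimpleGraph α) : Prop :=
  ∃ f : α ↪ Fin n, ∃ k : ℕ, ∀ u v : α, G.Adj u v → c s(f u, f v) = k

/-- `c` contains a rainbow (totally multicolored) copy of `H`. -/
def HasRainbowCopy {n : ℕ} (c : Sym2 (Fin n) → ℕ) (H : SimpleGraph β) : Prop :=
  ∃ f : β ↪ Fin n, ∀ u v u' v' : β, H.Adj u v → H.Adj u' v' →
    c s(f u, f v) = c s(f u', f v') → s(u, v) = s(u', v')

/-- A `(G,H)`-good coloring: no monochromatic `G` and no rainbow `H`. -/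
def GoodColoring {n : ℕ} (c : Sym2 (Fin n) → ℕ) (G : SimpleGraph α) (H : SimpleGraph β) : Prop :=
  ¬ HasMonoCopy c G ∧ ¬ HasRainbowCopy c H

/-- The mixed-Ramsey mixedSpectrum `S(n; G, H)`. -/
def mixedSpectrum (n : ℕ) (G : SimpleGraph α) (H : SimpleGraph β) : Set ℕ :=
  {k | ∃ c : Sym2 (Fin n) → ℕ, GoodColoring c G H ∧ (edgeColors c).card = k}

/-- `G` is a star: all edges share a common vertex. -/
def IsStar (G : SimpleGraph α) : Prop :=
  ∃ v : α, ∀ u w : α, G.Adj u w → u = v ∨ w = v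

/-- `K_3 + e`: a triangle `0,1,2` with a pendant edge `0-3`. -/
def K3e : SimpleGraph (Fin 4) := fromEdgeSet {s(0,1), s(0,2), s(1,2), s(0,3)}

/-- The 4-cycle `C_4`. -/
def C4g : SimpleGraph (Fin 4) := fromEdgeSet {s(0,1), s(1,2), s(2,3), s(3,0)}

/-- The matching `ℓK_2`. -/
def matchingGraph (ℓ : ℕ) : SimpleGraph (Fin ℓ × Fin 2) := fromRel (fun a b => a.1 = b.1)

/-- The star `K_{1,ℓ}`. -/
def starGraph (ℓ : ℕ) : SimpleGraph (Fin (ℓ+1)) := fromRel (fun a _ => a = 0)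

/-- The cycle `C_m` on `ZMod m`. -/
def cycGraph (m : ℕ) : SimpleGraph (ZMod m) := fromRel (fun a b => a = b + 1)

namespace CL

/-- level of a vertex -/
def lvl (ℓ v : ℕ) : ℕ := if v < 2*ℓ - 1 then 1 else (v - (2*ℓ-1))/(ℓ-1) + 2

/-- the Cockayne–Lorimer coloring -/
def col (ℓ n : ℕ) : Sym2 (Fin n) → ℕ :=
  Sym2.lift ⟨fun a b => lvl ℓ (max a.1 b.1), fun a b => by
    show lvl ℓ (max a.1 b.1) = lvl ℓ (max b.1 a.1)
    rw [max_comm]⟩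

lemma col_mk {ℓ n : ℕ} (a b : Fin n) : col ℓ n s(a,b) = lvl ℓ (max a.1 b.1) := rfl

lemma lvl_ge_one (ℓ v : ℕ) : 1 ≤ lvl ℓ v := by
  unfold lvl; split
  · exact le_refl 1
  · exact Nat.succ_le_succ (Nat.zero_le _)

lemma lvl_eq_one_iff {ℓ v : ℕ} : lvl ℓ v = 1 ↔ v < 2*ℓ-1 := by
  unfold lvl
  generalize (v - (2*ℓ-1))/(ℓ-1) = q
  split <;> rename_i h <;> simp [h]

lemma lvl_le {ℓ k v : ℕ} (hℓ : 2 ≤ ℓ) (hk : 1 ≤ k) (hv : v < 2*ℓ-1 + (k-1)*(ℓ-1)) :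
    lvl ℓ v ≤ k := by
  unfold lvl; split
  · omega
  · have hd0 : 0 < ℓ - 1 := by omega
    have h1 : (v - (2*ℓ-1))/(ℓ-1) < k - 1 :=
      (Nat.div_lt_iff_lt_mul hd0).mpr (by omega)
    generalize (v - (2*ℓ-1))/(ℓ-1) = q at h1 ⊢
    omega

lemma lvl_batch {ℓ j v : ℕ} (hℓ : 2 ≤ ℓ) (hj : 2 ≤ j) (h : lvl ℓ v = j) :
    2*ℓ-1 + (j-2)*(ℓ-1) ≤ v ∧ v < 2*ℓ-1 + (j-2)*(ℓ-1) + (ℓ-1) := by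
  unfold lvl at h
  split at h
  · omega
  · rename_i hv
    have h' : (v - (2*ℓ-1))/(ℓ-1) = j - 2 := by
      generalize (v - (2*ℓ-1))/(ℓ-1) = q at h ⊢
      omega
    have hd := Nat.div_add_mod (v - (2*ℓ-1)) (ℓ-1)
    have hm := Nat.mod_lt (v - (2*ℓ-1)) (y := ℓ-1) (by omega)
    rw [h'] at hd
    rw [Nat.mul_comm] at hd
    generalize (j-2)*(ℓ-1) = t at hd ⊢
    omega

lemma lvl_val {ℓ j : ℕ} (hℓ : 2 ≤ ℓ) (hj : 2 ≤ j) :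
    lvl ℓ (2*ℓ-1 + (j-2)*(ℓ-1)) = j := by
  unfold lvl
  rw [if_neg (by omega), Nat.add_sub_cancel_left, Nat.mul_div_cancel _ (by omega)]
  omega

lemma sym2_ne {β : Type*} {x y z : β} (hyz : y ≠ z) (hxy : x ≠ y) : s(x,y) ≠ s(x,z) := by
  intro h
  rcases Sym2.eq_iff.mp h with ⟨-, h⟩ | ⟨-, h⟩
  · exact hyz h
  · exact hxy h.symm

lemma no_rainbow {β : Type*} {ℓ n : ℕ} {H : SimpleGraph β}
    (hH : ∀ f : β ↪ Fin n, ∃ v u w : β, H.Adj v u ∧ H.Adj v w ∧ s(v,u) ≠ s(v,w)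
       ∧ (f u).1 < (f v).1 ∧ (f w).1 < (f v).1) :
    ¬ HasRainbowCopy (col ℓ n) H := by
  rintro ⟨f, hf⟩
  obtain ⟨v, u, w, h1, h2, h3, h4, h5⟩ := hH f
  refine h3 (hf v u v w h1 h2 ?_)
  rw [col_mk, col_mk, max_eq_left h4.le, max_eq_left h5.le]

lemma no_rainbow_tri {β : Type*} {ℓ n : ℕ} {H : SimpleGraph β} (a b d : β)
    (hab : H.Adj a b) (had : H.Adj a d) (hbd : H.Adj b d) :
    ¬ HasRainbowCopy (col ℓ n) H := by
  apply no_rainbow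
  intro f
  have key : ∀ x y : β, x ≠ y → (f x).1 ≤ (f y).1 → (f x).1 < (f y).1 := fun x y hxy hle =>
    lt_of_le_of_ne hle (fun h => hxy (f.injective (Fin.val_injective h)))
  rcases le_total (f b).1 (f d).1 with h1 | h1
  · rcases le_total (f a).1 (f d).1 with h2 | h2
    · exact ⟨d, a, b, had.symm, hbd.symm, sym2_ne hab.ne (Ne.symm had.ne),
        key a d had.ne h2, key b d hbd.ne h1⟩
    · exact ⟨a, b, d, hab, had, sym2_ne hbd.ne hab.ne,
        key b a (Ne.symm hab.ne) (h1.trans h2), key d a (Ne.symm had.ne) h2⟩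
  · rcases le_total (f a).1 (f b).1 with h2 | h2
    · exact ⟨b, a, d, hab.symm, hbd, sym2_ne had.ne (Ne.symm hab.ne),
        key a b hab.ne h2, key d b (Ne.symm hbd.ne) h1⟩
    · exact ⟨a, b, d, hab, had, sym2_ne hbd.ne hab.ne,
        key b a (Ne.symm hab.ne) h2, key d a (Ne.symm had.ne) (h1.trans h2)⟩

lemma no_rainbow_cyc {ℓ n m : ℕ} (hm : 3 ≤ m) : ¬ HasRainbowCopy (col ℓ n) (cycGraph m) := by
  haveI : NeZero m := ⟨by omega⟩
  have h2 : (2 : ZMod m) ≠ 0 := by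
    intro h
    have : ((2 : ℕ) : ZMod m) = 0 := by exact_mod_cast h
    have := (CharP.cast_eq_zero_iff (ZMod m) m 2).mp this
    have := Nat.le_of_dvd (by norm_num) this
    omega
  have h1 : (1 : ZMod m) ≠ 0 := by
    intro h
    apply h2
    calc (2 : ZMod m) = 1 + 1 := by norm_num
    _ = 0 := by rw [h, add_zero]
  apply no_rainbow
  intro f
  obtain ⟨v, -, hv⟩ := Finset.exists_max_image (Finset.univ : Finset (ZMod m))
    (fun x => (f x).1) ⟨0, Finset.mem_univ 0⟩
  have hne1 : v ≠ v + 1 := fun h => h1 (left_eq_add.mp h)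
  have hne2 : v ≠ v - 1 := fun h => h1 (sub_eq_self.mp h.symm)
  refine ⟨v, v + 1, v - 1, ?_, ?_, ?_, ?_, ?_⟩
  · exact SimpleGraph.fromRel_adj .. |>.mpr ⟨hne1, Or.inr rfl⟩
  · exact SimpleGraph.fromRel_adj .. |>.mpr ⟨hne2, Or.inl (by ring)⟩
  · intro h
    rcases Sym2.eq_iff.mp h with ⟨-, h⟩ | ⟨h, -⟩
    · exact h2 (by linear_combination h)
    · exact hne2 h
  · exact lt_of_le_of_ne (hv _ (Finset.mem_univ _))
      (fun h => hne1 (f.injective (Fin.val_injective h)).symm)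
  · exact lt_of_le_of_ne (hv _ (Finset.mem_univ _))
      (fun h => hne2 (f.injective (Fin.val_injective h)).symm)

lemma no_mono (ℓ k : ℕ) (hℓ : 2 ≤ ℓ) :
    ¬ HasMonoCopy (col ℓ (2*ℓ-1+(k-1)*(ℓ-1))) (matchingGraph ℓ) := by
  rintro ⟨f, j, hf⟩
  let g : Fin ℓ → ℕ := fun i => max (f (i,0)).1 (f (i,1)).1
  have hcol : ∀ i : Fin ℓ, lvl ℓ (g i) = j := by
    intro i
    have hadj : (matchingGraph ℓ).Adj (i,0) (i,1) := by
      rw [matchingGraph, SimpleGraph.fromRel_adj]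
      exact ⟨by simp, Or.inl rfl⟩
    have h := hf _ _ hadj
    rwa [col_mk] at h
  have ginj : Function.Injective g := by
    intro i i' h
    rcases max_choice (f (i,0)).1 (f (i,1)).1 with h1 | h1 <;>
      rcases max_choice (f (i',0)).1 (f (i',1)).1 with h2 | h2 <;>
      exact congrArg Prod.fst (f.injective (Fin.val_injective (h1.symm.trans (h.trans h2))))
  by_cases hj : j = 1
  · have hb : ∀ x : Fin ℓ × Fin 2, (f x).1 < 2*ℓ-1 := by
      rintro ⟨i, b⟩
      have h := lvl_eq_one_iff.mp (hj ▸ hcol i)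
      fin_cases b
      · exact lt_of_le_of_lt (le_max_left _ _) h
      · exact lt_of_le_of_lt (le_max_right _ _) h
    have hcard : (Finset.univ : Finset (Fin ℓ × Fin 2)).card ≤ (Finset.range (2*ℓ-1)).card := by
      rw [← Finset.card_image_of_injective Finset.univ
        (show Function.Injective (fun x => (f x).1) from
          fun x y h => f.injective (Fin.val_injective h))]
      apply Finset.card_le_card
      intro x hx
      rcases Finset.mem_image.mp hx with ⟨i, -, rfl⟩
      exact Finset.mem_range.mpr (hb i)
    simp only [Finset.card_univ, Fintype.card_prod, Fintype.card_fin, Finset.card_range] at hcard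
    omega
  · have hj2 : 2 ≤ j := by
      have := lvl_ge_one ℓ (g ⟨0, by omega⟩)
      rw [hcol ⟨0, by omega⟩] at this
      omega
    have hcard : (Finset.univ : Finset (Fin ℓ)).card ≤
        (Finset.Ico (2*ℓ-1 + (j-2)*(ℓ-1)) (2*ℓ-1 + (j-2)*(ℓ-1) + (ℓ-1))).card := by
      rw [← Finset.card_image_of_injective Finset.univ ginj]
      apply Finset.card_le_card
      intro x hx
      rcases Finset.mem_image.mp hx with ⟨i, -, rfl⟩
      exact Finset.mem_Ico.mpr (lvl_batch hℓ hj2 (hcol i))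
    simp only [Finset.card_univ, Fintype.card_fin, Nat.card_Ico] at hcard
    omega

lemma colors_card (ℓ k : ℕ) (hℓ : 2 ≤ ℓ) (hk : 1 ≤ k) :
    (edgeColors (col ℓ (2*ℓ-1+(k-1)*(ℓ-1)))).card = k := by
  have hn3 : 3 ≤ 2*ℓ-1+(k-1)*(ℓ-1) := by omega
  have he : edgeColors (col ℓ (2*ℓ-1+(k-1)*(ℓ-1))) = Finset.Icc 1 k := by
    ext j
    simp only [edgeColors, Finset.mem_image, Finset.mem_filter, Finset.mem_univ, true_and,
      Finset.mem_Icc]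
    constructor
    · rintro ⟨e, hd, rfl⟩
      induction e using Sym2.ind with
      | _ a b =>
        rw [col_mk]
        exact ⟨lvl_ge_one _ _, lvl_le hℓ hk (max_lt a.isLt b.isLt)⟩
    · rintro ⟨hj1, hjk⟩
      rcases eq_or_lt_of_le hj1 with hj | hj
      · refine ⟨s(⟨0, by omega⟩, ⟨1, by omega⟩), ?_, ?_⟩
        · simp [Sym2.mk_isDiag_iff, Fin.ext_iff]
        · rw [col_mk, ← hj]
          show lvl ℓ (max 0 1) = 1
          rw [lvl_eq_one_iff]
          omega
      · have hj2 : 2 ≤ j := hj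
        have hw : 2*ℓ-1 + (j-2)*(ℓ-1) < 2*ℓ-1+(k-1)*(ℓ-1) := by
          have : (j-2)*(ℓ-1) < (k-1)*(ℓ-1) :=
            (Nat.mul_lt_mul_right (a := ℓ-1) (by omega)).mpr (by omega)
          omega
        refine ⟨s(⟨0, by omega⟩, ⟨2*ℓ-1 + (j-2)*(ℓ-1), hw⟩), ?_, ?_⟩
        · simp only [Sym2.mk_isDiag_iff, Fin.mk.injEq]
          omega
        · rw [col_mk]
          show lvl ℓ (max 0 (2*ℓ-1 + (j-2)*(ℓ-1))) = j
          rw [Nat.max_eq_right (by omega)]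
          exact lvl_val hℓ hj2
  rw [he, Nat.card_Icc]
  omega

end CL

/-- The Cockayne–Lorimer extremal coloring: a `k`-coloring of the complete graph on
`(2ℓ-1)+(k-1)(ℓ-1)` vertices with no monochromatic `ℓK_2` and no rainbow cycle
(in particular no rainbow `K_3` and no rainbow `K_3+e`). -/
theorem stmt_7 (ℓ k : ℕ) (hℓ : 2 ≤ ℓ) (hk : 1 ≤ k) :
    ∃ c : Sym2 (Fin (2*ℓ - 1 + (k-1)*(ℓ-1))) → ℕ,
      (edgeColors c).card = k ∧ ¬ HasMonoCopy c (matchingGraph ℓ) ∧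
      (∀ m : ℕ, 3 ≤ m → ¬ HasRainbowCopy c (cycGraph m)) ∧
      ¬ HasRainbowCopy c (completeGraph (Fin 3)) ∧ ¬ HasRainbowCopy c K3e := by
  refine ⟨CL.col ℓ _, CL.colors_card ℓ k hℓ hk, CL.no_mono ℓ k hℓ,
    fun m hm => CL.no_rainbow_cyc hm, ?_, ?_⟩
  · exact CL.no_rainbow_tri 0 1 2 (by simp [completeGraph]) (by simp [completeGraph])
      (by simp [completeGraph])
  · exact CL.no_rainbow_tri 0 1 2 (by simp [K3e]) (by simp [K3e]) (by simp [K3e])
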